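/- For s > 2 and u ∈ {2,…,s-1}, the infimum of S_{(s,u)} equals 1/(s-1), attained as Σ_{k=1}^∞ (1-u)/s^k + u/(s-1); and for u ∈ {1,…,s-2}, the supremum of S_{(s,u)} equals 1/(s^{u+1}−1) + u/(s−1), given by Σ_{k=1}^∞ 1/s^{(u+1)k} + u/(s−1). -/

import Mathlib

open Finset

/-- The sequence `(c_k)` has all terms in `{1, ..., s-1} \\ {u}`. -/
def uValid (s u : ℕ) (c : ℕ → ℕ) : Prop := ∀ k, 1 ≤ c k ∧ c k ≤ s - 1 ∧ c k ≠ u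

/-- `x = u/(s-1) + Σ_{k=1}^∞ (c_k - u)/s^{c_1+⋯+c_k}`. -/
noncomputable def uVal (s u : ℕ) (c : ℕ → ℕ) : ℝ :=
  (u : ℝ) / ((s : ℝ) - 1) +
    ∑' n : ℕ, ((c n : ℝ) - (u : ℝ)) / (s : ℝ) ^ (∑ k ∈ Finset.range (n + 1), c k)

/-- The set `S_{(s,u)}`. -/
def Uset (s u : ℕ) : Set ℝ := { x | ∃ c : ℕ → ℕ, uValid s u c ∧ x = uVal s u c }

noncomputable def uT (s u : ℕ) (c : ℕ → ℕ) : ℝ :=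
  ∑' n : ℕ, ((c n : ℝ) - (u : ℝ)) / (s : ℝ) ^ (∑ k ∈ Finset.range (n + 1), c k)

lemma uVal_eq (s u : ℕ) (c : ℕ → ℕ) : uVal s u c = (u : ℝ) / ((s : ℝ) - 1) + uT s u c := rfl

lemma uValid_sum_ge {s u : ℕ} {c : ℕ → ℕ} (h : uValid s u c) (n : ℕ) :
    n + 1 ≤ ∑ k ∈ Finset.range (n + 1), c k := by
  calc n + 1 = ∑ _k ∈ Finset.range (n+1), 1 := by simp
  _ ≤ _ := Finset.sum_le_sum fun i _ => (h i).1

-- geometric tail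
lemma tsum_geom_succ {r : ℝ} (h0 : 0 ≤ r) (h1 : r < 1) :
    ∑' n : ℕ, r ^ (n + 1) = r / (1 - r) := by
  have := tsum_geometric_of_lt_one h0 h1
  calc ∑' n : ℕ, r ^ (n + 1) = ∑' n : ℕ, r * r ^ n := by
        congr 1; ext n; rw [pow_succ, mul_comm]
  _ = r * (1 - r)⁻¹ := by rw [tsum_mul_left, this]
  _ = r / (1 - r) := by rw [div_eq_mul_inv]

lemma summable_div_pow {s : ℕ} (hs : 2 < s) (a : ℕ → ℝ) (S : ℕ → ℕ)
    (ha : ∀ n, |a n| ≤ s) (hS : ∀ n, n + 1 ≤ S n) :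
    Summable fun n => a n / (s:ℝ) ^ S n := by
  have hs1 : (1:ℝ) < s := by exact_mod_cast Nat.lt_of_lt_of_le Nat.one_lt_two hs.le
  have hs0 : (0:ℝ) < s := lt_trans one_pos hs1
  apply Summable.of_norm_bounded (g := fun n => ((s:ℝ)⁻¹)^n)
  · exact summable_geometric_of_lt_one (by positivity) (inv_lt_one_of_one_lt₀ hs1)
  · intro n
    have h1 : ‖a n / (s:ℝ) ^ S n‖ = |a n| / (s:ℝ) ^ S n := by
      rw [Real.norm_eq_abs, abs_div, abs_of_pos (pow_pos hs0 _)]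
    rw [h1]
    have h2 : (s:ℝ) ^ (n+1) ≤ (s:ℝ) ^ S n := pow_le_pow_right₀ hs1.le (hS n)
    have h3 : |a n| / (s:ℝ) ^ S n ≤ (s:ℝ) / (s:ℝ) ^ (n+1) :=
      div_le_div₀ hs0.le (ha n) (by positivity) h2
    refine h3.trans_eq ?_
    rw [pow_succ, inv_pow]
    field_simp

lemma abs_sub_le_s {s u : ℕ} (hu : u ≤ s - 1) {c : ℕ → ℕ} (h : uValid s u c) (n : ℕ) :
    |((c n : ℝ) - u)| ≤ s := by
  have h1 := (h n).2.1
  have h2 : (c n : ℝ) ≤ s := by exact_mod_cast Nat.le_trans h1 (Nat.sub_le s 1)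
  have h3 : (u : ℝ) ≤ s := by exact_mod_cast Nat.le_trans hu (Nat.sub_le s 1)
  have h4 : (0:ℝ) ≤ c n := Nat.cast_nonneg _
  have h5 : (0:ℝ) ≤ u := Nat.cast_nonneg _
  rw [abs_sub_le_iff]; constructor <;> linarith

lemma summable_uT {s u : ℕ} (hs : 2 < s) (hu : u ≤ s - 1) {c : ℕ → ℕ} (h : uValid s u c) :
    Summable fun n => ((c n : ℝ) - u) / (s:ℝ) ^ (∑ k ∈ Finset.range (n + 1), c k) :=
  summable_div_pow hs _ _ (abs_sub_le_s hu h) (uValid_sum_ge h)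

lemma uT_le {s u : ℕ} (hs : 2 < s) (hu : u ≤ s - 1) {c : ℕ → ℕ} (h : uValid s u c) :
    uT s u c ≤ (s:ℝ) / ((s:ℝ) - 1) := by
  have hs1 : (1:ℝ) < s := by exact_mod_cast Nat.lt_of_lt_of_le Nat.one_lt_two hs.le
  have hs0 : (0:ℝ) < s := lt_trans one_pos hs1
  have hsum := summable_uT hs hu h
  have hg : Summable (fun n : ℕ => ((s:ℝ)⁻¹)^n) :=
    summable_geometric_of_lt_one (by positivity) (inv_lt_one_of_one_lt₀ hs1)
  have hb : ∀ n, ‖((c n : ℝ) - u) / (s:ℝ) ^ (∑ k ∈ Finset.range (n + 1), c k)‖ ≤ ((s:ℝ)⁻¹)^n := by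
    intro n
    have h1 : ‖((c n : ℝ) - u) / (s:ℝ) ^ (∑ k ∈ Finset.range (n + 1), c k)‖
        = |((c n : ℝ) - u)| / (s:ℝ) ^ (∑ k ∈ Finset.range (n + 1), c k) := by
      rw [Real.norm_eq_abs, abs_div, abs_of_pos (pow_pos hs0 _)]
    rw [h1]
    have h2 : (s:ℝ) ^ (n+1) ≤ (s:ℝ) ^ (∑ k ∈ Finset.range (n + 1), c k) :=
      pow_le_pow_right₀ hs1.le (uValid_sum_ge h n)
    refine (div_le_div₀ hs0.le (abs_sub_le_s hu h n) (by positivity) h2).trans_eq ?_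
    rw [pow_succ, inv_pow]
    field_simp
  calc uT s u c ≤ ‖uT s u c‖ := le_abs_self _
  _ ≤ ∑' n : ℕ, ((s:ℝ)⁻¹)^n := (norm_tsum_le_tsum_norm
        (hg.of_nonneg_of_le (fun n => norm_nonneg _) hb)).trans (Summable.tsum_le_tsum hb (hsum.norm) hg)
  _ = (1 - (s:ℝ)⁻¹)⁻¹ := tsum_geometric_of_lt_one (by positivity) (inv_lt_one_of_one_lt₀ hs1)
  _ = (s:ℝ) / ((s:ℝ) - 1) := by
        rw [show (1 - (s:ℝ)⁻¹) = ((s:ℝ)-1)/(s:ℝ) from by field_simp, inv_div]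

lemma uT_shift {s u : ℕ} (hs : 2 < s) (hu : u ≤ s - 1) {c : ℕ → ℕ} (hc : uValid s u c) :
    uT s u c = ((c 0 : ℝ) - u) / (s:ℝ)^(c 0)
      + ((1:ℝ)/(s:ℝ)^(c 0)) * uT s u (fun n => c (n+1)) := by
  have hs0 : (0:ℝ) < s := by positivity
  have hsum := summable_uT hs hu hc
  have key : ∀ b:ℕ, ((c (b+1):ℝ) - u) / (s:ℝ) ^ (∑ k ∈ Finset.range (b+1+1), c k)
      = ((1:ℝ)/(s:ℝ)^(c 0)) * (((c (b+1):ℝ) - u) / (s:ℝ) ^ (∑ k ∈ Finset.range (b+1), c (k+1))) := by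
    intro b
    rw [Finset.sum_range_succ' c (b+1), pow_add]
    have h1 : ((s:ℝ))^(∑ k ∈ Finset.range (b+1), c (k+1)) ≠ 0 := by positivity
    have h2 : ((s:ℝ))^(c 0) ≠ 0 := by positivity
    field_simp
  have h2 : ∑' b:ℕ, ((c (b+1):ℝ) - u) / (s:ℝ) ^ (∑ k ∈ Finset.range (b+1+1), c k)
      = ((1:ℝ)/(s:ℝ)^(c 0)) * uT s u (fun n => c (n+1)) := by
    rw [uT, ← tsum_mul_left]
    exact tsum_congr key
  rw [uT, Summable.tsum_eq_zero_add hsum]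
  beta_reduce
  rw [h2]
  norm_num

lemma uT_const {s u m : ℕ} (hs : 2 < s) (hm : 1 ≤ m) :
    uT s u (fun _ => m) = ((m:ℝ) - u) / ((s:ℝ)^m - 1) := by
  have hs1 : (1:ℝ) < s := by exact_mod_cast lt_of_lt_of_le Nat.one_lt_two hs.le
  have hsm : (1:ℝ) < (s:ℝ)^m := one_lt_pow₀ hs1 (by omega)
  set r : ℝ := ((s:ℝ)^m)⁻¹ with hr
  have hr0 : 0 ≤ r := by positivity
  have hr1 : r < 1 := inv_lt_one_of_one_lt₀ hsm
  have hterm : ∀ n:ℕ, ((m:ℝ) - u) / (s:ℝ) ^ (∑ _k ∈ Finset.range (n+1), m)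
      = ((m:ℝ) - u) * r ^ (n+1) := by
    intro n
    rw [Finset.sum_const, Finset.card_range, smul_eq_mul, mul_comm, pow_mul, hr,
      div_eq_mul_inv, inv_pow]
  rw [uT]
  rw [tsum_congr hterm, tsum_mul_left, tsum_geom_succ hr0 hr1]
  have h1 : 1 - r = ((s:ℝ)^m - 1)/(s:ℝ)^m := by
    rw [hr]; field_simp
  rw [h1, div_div_eq_mul_div, hr, inv_mul_cancel₀ (by positivity : ((s:ℝ)^m) ≠ 0), mul_one_div]

lemma core_ineq {s u : ℕ} (hs : 2 < s) (hu1 : 1 ≤ u) (hu2 : u + 2 ≤ s) (v : ℕ)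
    (hv1 : 1 ≤ v) (hv2 : v ≤ s - 1) (hvu : v ≠ u) {x : ℝ}
    (hx : 1 / ((s:ℝ)^(u+1) - 1) ≤ x) :
    ((v:ℝ) - u + x) / (s:ℝ)^v ≤ (x + ((s:ℝ)-1) * (1/((s:ℝ)^(u+1)-1))) / (s:ℝ) := by
  have hs1 : (1:ℝ) < s := by exact_mod_cast lt_of_lt_of_le Nat.one_lt_two hs.le
  have hs0 : (0:ℝ) < s := lt_trans one_pos hs1
  set P : ℝ := (s:ℝ)^(u+1) with hPdef
  have hP1 : 1 < P := one_lt_pow₀ hs1 (by omega)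
  have hPs : (s:ℝ) ≤ P := by
    calc (s:ℝ) = (s:ℝ)^1 := (pow_one _).symm
    _ ≤ P := pow_le_pow_right₀ hs1.le (by omega)
  set B : ℝ := 1/(P-1) with hBdef
  have hB0 : 0 < B := div_pos one_pos (by linarith)
  have hPB : B * (P - 1) = 1 := by rw [hBdef, one_div, inv_mul_cancel₀ (by linarith)]
  have hx0 : (0:ℝ) ≤ x := le_trans hB0.le hx
  have hb : (0:ℝ) ≤ ((s:ℝ)-1)*B := mul_nonneg (by linarith) hB0.le
  have hRHS0 : 0 ≤ (x + ((s:ℝ)-1) * B) / (s:ℝ) :=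
    div_nonneg (by linarith) hs0.le
  rcases lt_or_ge v u with hvu' | hvu'
  · -- v < u
    have hcast : (v:ℝ) - u ≤ -1 := by
      have : (v:ℝ) + 1 ≤ u := by exact_mod_cast hvu'
      linarith
    have hsv1 : (s:ℝ) ≤ (s:ℝ)^v := by
      calc (s:ℝ) = (s:ℝ)^1 := (pow_one _).symm
      _ ≤ _ := pow_le_pow_right₀ hs1.le hv1
    rcases le_or_gt x 1 with hx1 | hx1
    · have h1 : ((v:ℝ) - u + x) / (s:ℝ)^v ≤ 0 :=
        div_nonpos_of_nonpos_of_nonneg (by linarith) (pow_pos hs0 v).le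
      linarith
    · calc ((v:ℝ) - u + x) / (s:ℝ)^v ≤ (x-1) / (s:ℝ)^v := by gcongr <;> linarith
      _ ≤ (x-1)/(s:ℝ) := by
          apply div_le_div_of_nonneg_left (by linarith) hs0 hsv1
      _ ≤ (x + ((s:ℝ)-1)*B)/(s:ℝ) := by gcongr <;> linarith
  · -- v ≥ u + 1
    have hvu'' : u + 1 ≤ v := by omega
    have step1 : ((v:ℝ) - u + x) / (s:ℝ)^v ≤ (1 + x) / P := by
      rw [div_le_div_iff₀ (by positivity) (by positivity), hPdef]
      have hsv : (s:ℝ)^v = (s:ℝ)^(u+1) * (s:ℝ)^(v-u-1) := by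
        rw [← pow_add]; congr 1; omega
      have hw : ((v:ℝ) - u) ≤ (s:ℝ)^(v-u-1) := by
        have h2 : v - u ≤ 2^(v-u-1) := by
          have := Nat.lt_two_pow_self (n := v-u-1); omega
        have h3 : (2:ℕ)^(v-u-1) ≤ s^(v-u-1) := Nat.pow_le_pow_left (by omega) _
        have h4 : ((v - u : ℕ) : ℝ) ≤ ((s:ℕ) : ℝ)^(v-u-1) := by
          exact_mod_cast le_trans h2 h3
        rw [Nat.cast_sub (by omega)] at h4
        exact_mod_cast h4
      have hone : (1:ℝ) ≤ (s:ℝ)^(v-u-1) := one_le_pow₀ hs1.le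
      rw [hsv]
      have hP0 : (0:ℝ) < (s:ℝ)^(u+1) := by positivity
      nlinarith [mul_le_mul_of_nonneg_left hone hx0, hP0.le, mul_le_mul_of_nonneg_left hw hP0.le,
        mul_le_mul_of_nonneg_left (mul_le_mul_of_nonneg_left hone hx0) hP0.le]
    refine step1.trans ?_
    rw [div_le_div_iff₀ (by positivity) hs0]
    have h5 : (P - s)*B ≤ (P - s)*x := mul_le_mul_of_nonneg_left hx (by linarith)
    have h6 : (s:ℝ) * (B*(P-1)) = s := by rw [hPB, mul_one]
    nlinarith [h5, h6]

lemma tsum_div_pow_succ {p : ℝ} (hp : 1 < p) (a : ℝ) :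
    ∑' k : ℕ, a / p^(k+1) = a/(p-1) := by
  have hp0 : (0:ℝ) < p := lt_trans one_pos hp
  have hterm : ∀ k:ℕ, a/p^(k+1) = a * (p⁻¹)^(k+1) := fun k => by
    rw [div_eq_mul_inv, inv_pow]
  rw [tsum_congr hterm, tsum_mul_left,
    tsum_geom_succ (by positivity) (inv_lt_one_of_one_lt₀ hp)]
  have hne : 1 - p⁻¹ ≠ 0 := by
    have : p⁻¹ < 1 := inv_lt_one_of_one_lt₀ hp
    linarith
  rw [show p⁻¹/(1-p⁻¹) = 1/(p-1) from by
    rw [div_eq_div_iff hne (by linarith : p - 1 ≠ 0)]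
    field_simp]
  rw [mul_one_div]

lemma uT_ge {s u : ℕ} (hs : 2 < s) (hu : u ≤ s - 1) (hu2 : 1 ≤ u) {c : ℕ → ℕ}
    (h : uValid s u c) :
    -(((u:ℝ)-1)/((s:ℝ)-1)) ≤ uT s u c := by
  have hs1 : (1:ℝ) < s := by exact_mod_cast lt_of_lt_of_le Nat.one_lt_two hs.le
  have hs0 : (0:ℝ) < s := lt_trans one_pos hs1
  have hu1R : (1:ℝ) ≤ u := by exact_mod_cast hu2
  have huS : (u:ℝ) ≤ s := by
    have : u ≤ s := le_trans hu (Nat.sub_le s 1); exact_mod_cast this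
  set C : ℕ → ℕ := fun n => ∑ k ∈ Finset.range (n+1), c k with hC
  have habs : ∀ _n:ℕ, |(u:ℝ)-1| ≤ s := fun _ => by
    rw [abs_of_nonneg (by linarith)]; linarith
  have hf1 : Summable fun n => ((c n:ℝ) - u)/(s:ℝ)^(C n) := summable_uT hs hu h
  have hf2 : Summable fun n => ((u:ℝ) - 1)/(s:ℝ)^(C n) :=
    summable_div_pow hs _ _ habs (uValid_sum_ge h)
  have hg : Summable fun j : ℕ => ((u:ℝ) - 1)/(s:ℝ)^(j+1) :=
    summable_div_pow hs _ _ habs (fun j => le_refl _)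
  have hmono : StrictMono C := strictMono_nat_of_lt_succ fun n => by
    have h1 := (h (n+1)).1
    have : C (n+1) = C n + c (n+1) := Finset.sum_range_succ c (n+1)
    omega
  have hC1 : ∀ n, 1 ≤ C n := fun n => le_trans (by omega) (uValid_sum_ge h n)
  have hinj : Function.Injective (fun n => C n - 1) := by
    intro a b hab
    simp only at hab
    exact hmono.injective (by have := hC1 a; have := hC1 b; omega)
  have hcmp : (∑' n, ((u:ℝ) - 1)/(s:ℝ)^(C n)) ≤ ∑' j : ℕ, ((u:ℝ) - 1)/(s:ℝ)^(j+1) := by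
    apply Summable.tsum_le_tsum_of_inj (fun n => C n - 1) hinj
    · intro j _
      apply div_nonneg (by linarith) (by positivity)
    · intro n
      have : C n - 1 + 1 = C n := by have := hC1 n; omega
      simp only [this]
      exact le_refl _
    · exact hf2
    · exact hg
  have hadd : uT s u c + (∑' n, ((u:ℝ) - 1)/(s:ℝ)^(C n))
      = ∑' n, ((c n:ℝ) - 1)/(s:ℝ)^(C n) := by
    rw [uT, ← Summable.tsum_add hf1 hf2]
    apply tsum_congr
    intro n
    rw [← add_div]
    congr 1
    ring
  have hpos : 0 ≤ ∑' n, ((c n:ℝ) - 1)/(s:ℝ)^(C n) := by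
    apply tsum_nonneg
    intro n
    have : (1:ℝ) ≤ c n := by exact_mod_cast (h n).1
    apply div_nonneg (by linarith) (by positivity)
  have hgval : (∑' j : ℕ, ((u:ℝ) - 1)/(s:ℝ)^(j+1)) = ((u:ℝ)-1)/((s:ℝ)-1) :=
    tsum_div_pow_succ hs1 _
  rw [← hadd] at hpos
  rw [hgval] at hcmp
  linarith

theorem stmt15 (s u : ℕ) (hs : 2 < s) (hu : u ≤ s - 1) :
    (2 ≤ u →
      IsLeast (Uset s u) (1 / ((s : ℝ) - 1)) ∧
        (1 : ℝ) / ((s : ℝ) - 1) =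
          (∑' k : ℕ, ((1 : ℝ) - (u : ℝ)) / (s : ℝ) ^ (k + 1)) + (u : ℝ) / ((s : ℝ) - 1)) ∧
    (1 ≤ u → u ≤ s - 2 →
      IsGreatest (Uset s u) (1 / ((s : ℝ) ^ (u + 1) - 1) + (u : ℝ) / ((s : ℝ) - 1)) ∧
        (1 : ℝ) / ((s : ℝ) ^ (u + 1) - 1) + (u : ℝ) / ((s : ℝ) - 1) =
          (∑' k : ℕ, (1 : ℝ) / (s : ℝ) ^ ((u + 1) * (k + 1))) + (u : ℝ) / ((s : ℝ) - 1)) := by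
  have hs1 : (1:ℝ) < s := by exact_mod_cast lt_of_lt_of_le Nat.one_lt_two hs.le
  have hs0 : (0:ℝ) < s := lt_trans one_pos hs1
  constructor
  · -- minimum part
    intro hu2
    constructor
    · constructor
      · -- membership
        refine ⟨fun _ => 1, fun k => ⟨le_rfl, by show 1 ≤ s - 1; omega, by show 1 ≠ u; omega⟩, ?_⟩
        rw [uVal_eq, uT_const hs le_rfl, pow_one, Nat.cast_one, ← add_div]
        congr 1
        ring
      · -- lower bound
        rintro x ⟨c, hc, rfl⟩
        rw [uVal_eq]
        have h1 := uT_ge hs hu (by omega) hc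
        have h2 : (u:ℝ)/((s:ℝ)-1) - ((u:ℝ)-1)/((s:ℝ)-1) = 1/((s:ℝ)-1) := by
          rw [← sub_div]
          congr 1
          ring
        linarith
    · -- equality (a)
      rw [tsum_div_pow_succ hs1, ← add_div]
      congr 1
      ring
  · -- maximum part
    intro hu1 hu2'
    have hus : u + 2 ≤ s := by omega
    have hP1 : (1:ℝ) < (s:ℝ)^(u+1) := one_lt_pow₀ hs1 (by omega)
    set B : ℝ := 1/((s:ℝ)^(u+1)-1) with hBdef
    have hB0 : 0 < B := div_pos one_pos (by linarith)
    constructor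
    · -- IsGreatest
      have hvalid2 : uValid s u (fun _ => u+1) := fun k =>
        ⟨by show 1 ≤ u + 1; omega, by show u + 1 ≤ s - 1; omega, by show u + 1 ≠ u; omega⟩
      have hMmem : (1 / ((s:ℝ)^(u+1) - 1) + (u:ℝ)/((s:ℝ)-1)) ∈ Uset s u := by
        refine ⟨fun _ => u+1, hvalid2, ?_⟩
        rw [uVal_eq, uT_const hs (by omega)]
        push_cast
        ring
      have hne : (Uset s u).Nonempty := ⟨_, hMmem⟩
      have hbdd : BddAbove (Uset s u) := by
        refine ⟨(u:ℝ)/((s:ℝ)-1) + (s:ℝ)/((s:ℝ)-1), ?_⟩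
        rintro x ⟨c, hc, rfl⟩
        rw [uVal_eq]
        have := uT_le hs hu hc
        linarith
      set A : ℝ := sSup (Uset s u) with hAdef
      have hMA : 1 / ((s:ℝ)^(u+1) - 1) + (u:ℝ)/((s:ℝ)-1) ≤ A := le_csSup hbdd hMmem
      have hyB : B ≤ A - (u:ℝ)/((s:ℝ)-1) := by rw [hBdef]; linarith
      have key : ∀ x ∈ Uset s u,
          x ≤ (u:ℝ)/((s:ℝ)-1) + ((A - (u:ℝ)/((s:ℝ)-1)) + ((s:ℝ)-1)*B)/(s:ℝ) := by
        rintro x ⟨c, hc, rfl⟩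
        have hc' : uValid s u (fun n => c (n+1)) := fun n => hc (n+1)
        have hshift := uT_shift hs hu hc
        have htail : uT s u (fun n => c (n+1)) ≤ A - (u:ℝ)/((s:ℝ)-1) := by
          have hmem : uVal s u (fun n => c (n+1)) ∈ Uset s u := ⟨_, hc', rfl⟩
          have h3 := le_csSup hbdd hmem
          rw [uVal_eq] at h3
          linarith
        have h0 := hc 0
        have hci := core_ineq hs hu1 hus (c 0) h0.1 h0.2.1 h0.2.2 hyB
        rw [← hBdef] at hci
        have hpow : (0:ℝ) < (s:ℝ)^(c 0) := by positivity
        rw [uVal_eq, hshift]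
        have hmul : (1/(s:ℝ)^(c 0)) * uT s u (fun n => c (n+1))
            ≤ (1/(s:ℝ)^(c 0)) * (A - (u:ℝ)/((s:ℝ)-1)) :=
          mul_le_mul_of_nonneg_left htail (by positivity)
        have hsplit : ((c 0:ℝ) - u + (A - (u:ℝ)/((s:ℝ)-1)))/(s:ℝ)^(c 0)
            = ((c 0:ℝ) - u)/(s:ℝ)^(c 0) + (1/(s:ℝ)^(c 0)) * (A - (u:ℝ)/((s:ℝ)-1)) := by
          rw [add_div]
          ring
        rw [hsplit] at hci
        linarith
      have hA : A ≤ (u:ℝ)/((s:ℝ)-1) + ((A - (u:ℝ)/((s:ℝ)-1)) + ((s:ℝ)-1)*B)/(s:ℝ) :=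
        csSup_le hne key
      have hyleB : A - (u:ℝ)/((s:ℝ)-1) ≤ B := by
        set y : ℝ := A - (u:ℝ)/((s:ℝ)-1) with hy
        have h4 : y ≤ (y + ((s:ℝ)-1)*B)/(s:ℝ) := by linarith
        rw [le_div_iff₀ hs0] at h4
        nlinarith
      constructor
      · exact hMmem
      · intro x hx
        have := le_csSup hbdd hx
        rw [hBdef] at hyleB
        linarith
    · -- equality (b)
      have hterm : ∀ k:ℕ, (1:ℝ)/(s:ℝ)^((u+1)*(k+1)) = (1:ℝ)/((s:ℝ)^(u+1))^(k+1) :=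
        fun k => by rw [pow_mul]
      rw [tsum_congr hterm, tsum_div_pow_succ hP1]
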